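/- Let (v_t)_{t∈2^{<ℕ}} be a sequence of elements of c₀₀ ⊆ E_X which is topologically equivalent to the basis of James tree and is a tree-block, i.e. for every σ ∈ 2^ℕ the sequence (v_{σ|n})_{n∈ℕ} is a block sequence of (e_n). Then there exist a dyadic subtree S₀ of 2^{<ℕ} and a constant Θ ≥ 1 such that Θ^{-1} ≤ ‖Q_X(v_t)‖_X ≤ Θ for every t ∈ S₀. -/

import Mathlib

open Filter

/-- `s` is a strict initial segment (proper prefix) of `t` in the dyadic tree
`2^{<ℕ}` (realized as `List Bool`). -/
def StrictPrefix (s t : List Bool) : Prop := s <+: t ∧ s ≠ t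

/-- For incomparable nodes: `s ≺ t` iff `(s ∧ t)⌢0 ⊑ s` and `(s ∧ t)⌢1 ⊑ t`
where `s ∧ t` is the longest common initial segment of `s` and `t`
(equivalently, some common prefix `w` satisfies `w⌢0 ⊑ s` and `w⌢1 ⊑ t`). -/
def PrecRel (s t : List Bool) : Prop :=
  ∃ w : List Bool, (w ++ [false]) <+: s ∧ (w ++ [true]) <+: t

/-- A dyadic subtree of `2^{<ℕ}`: an injective indexing `d : 2^{<ℕ} → 2^{<ℕ}`
preserving and reflecting both `⊏` and `≺`. -/
def IsDyadicSubtree (d : List Bool → List Bool) : Prop :=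
  Function.Injective d ∧
  (∀ t₀ t₁ : List Bool, StrictPrefix t₀ t₁ ↔ StrictPrefix (d t₀) (d t₁)) ∧
  (∀ t₀ t₁ : List Bool, PrecRel t₀ t₁ ↔ PrecRel (d t₀) (d t₁))

/-- A sequence `(x t)_{t ∈ 2^{<ℕ}}` in a Banach space `X` is topologically
equivalent to the basis of James tree. -/
def TopEquivJamesTree {X : Type*} [NormedAddCommGroup X] [NormedSpace ℝ X]
    (x : List Bool → X) : Prop :=
  (∃ c C : ℝ, 0 < c ∧ c ≤ C ∧ ∀ t : List Bool, c ≤ ‖x t‖ ∧ ‖x t‖ ≤ C) ∧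
  (∀ e : ℕ → List Bool, Function.Injective e →
    (∀ i j : ℕ, i ≠ j → ¬ (e i <+: e j) ∧ ¬ (e j <+: e i)) →
    ∀ f : X →L[ℝ] ℝ, Tendsto (fun n => f (x (e n))) atTop (nhds 0)) ∧
  (∃ L : (ℕ → Bool) → StrongDual ℝ (StrongDual ℝ X),
    (∀ (σ : ℕ → Bool) (f : StrongDual ℝ X),
      Tendsto (fun n => f (x (List.ofFn fun i : Fin n => σ i))) atTop (nhds (L σ f))) ∧
    (∀ σ : ℕ → Bool, L σ ∉ Set.range (NormedSpace.inclusionInDoubleDual ℝ X)) ∧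
    (∀ σ τ : ℕ → Bool, σ ≠ τ → L σ ≠ L τ))

/-- two prefixes of same list with ≤ length -/
lemma prefix_of_prefix_le {a b c : List Bool} (h1 : a <+: c) (h2 : b <+: c)
    (h : a.length ≤ b.length) : a <+: b :=
  List.prefix_of_prefix_length_le h1 h2 h

lemma prefix_eq_of_length {a b c : List Bool} (h1 : a <+: c) (h2 : b <+: c)
    (h : a.length = b.length) : a = b :=
  (prefix_of_prefix_le h1 h2 h.le).eq_of_length (by simp [h])

lemma PrecRel.not_prefix {s t : List Bool} (h : PrecRel s t) :
    ¬ s <+: t ∧ ¬ t <+: s := by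
  obtain ⟨w, h0, h1⟩ := h
  constructor
  · intro hst
    have := prefix_eq_of_length (h0.trans hst) h1 (by simp)
    simpa using this
  · intro hts
    have := prefix_eq_of_length h0 (h1.trans hts) (by simp)
    simpa using this

lemma PrecRel.ne {s t : List Bool} (h : PrecRel s t) : s ≠ t := by
  intro he; exact h.not_prefix.1 (he ▸ List.prefix_refl s)

lemma PrecRel.asymm {s t : List Bool} (h : PrecRel s t) : ¬ PrecRel t s := by
  rintro ⟨u, hu0, hu1⟩
  obtain ⟨w, hw0, hw1⟩ := h
  -- hw0 : w++[false] <+: s, hu1 : u++[true] <+: s ; hw1 : w++[true] <+: t, hu0 : u++[false] <+: t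
  rcases lt_trichotomy w.length u.length with hl | hl | hl
  · -- w++[false] prefix of u (length |w|+1 ≤ |u|), so w++[false] <+: u++[false] <+: t
    have h1 : (w ++ [false]) <+: u := by
      have := prefix_of_prefix_le hw0 hu1 (by simp; omega)
      exact prefix_of_prefix_le this (List.prefix_append u [true]) (by simp; omega)
    have h2 : (w ++ [false]) <+: t := h1.trans ((List.prefix_append u [false]).trans hu0)
    have := prefix_eq_of_length h2 hw1 (by simp)
    simpa using this
  · have := prefix_eq_of_length hw0 hu1 (by simp [hl])
    have := (List.append_inj' this (by simp)).2
    simp at this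
  · have h1 : (u ++ [false]) <+: w := by
      have := prefix_of_prefix_le hu0 hw1 (by simp; omega)
      exact prefix_of_prefix_le this (List.prefix_append w [true]) (by simp; omega)
    have h2 : (u ++ [false]) <+: s := h1.trans ((List.prefix_append w [false]).trans hw0)
    have := prefix_eq_of_length h2 hu1 (by simp)
    simpa using this

lemma tree_trichotomy : ∀ s t : List Bool,
    s <+: t ∨ t <+: s ∨ PrecRel s t ∨ PrecRel t s := by
  intro s
  induction s with
  | nil => intro t; exact Or.inl (List.nil_prefix)
  | cons a s ih =>
    intro t
    cases t with
    | nil => exact Or.inr (Or.inl List.nil_prefix)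
    | cons b t =>
      by_cases hab : a = b
      · subst hab
        rcases ih t with h | h | h | h
        · exact Or.inl (by simpa [List.cons_prefix_iff] using h)
        · exact Or.inr (Or.inl (by simpa [List.cons_prefix_iff] using h))
        · obtain ⟨w, h0, h1⟩ := h
          exact Or.inr (Or.inr (Or.inl ⟨a :: w, by simpa [List.cons_prefix_iff] using h0,
            by simpa [List.cons_prefix_iff] using h1⟩))
        · obtain ⟨w, h0, h1⟩ := h
          exact Or.inr (Or.inr (Or.inr ⟨a :: w, by simpa [List.cons_prefix_iff] using h0,
            by simpa [List.cons_prefix_iff] using h1⟩))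
      · cases a <;> cases b <;> simp at hab
        · exact Or.inr (Or.inr (Or.inl ⟨[], by simp [List.cons_prefix_iff],
            by simp [List.cons_prefix_iff]⟩))
        · exact Or.inr (Or.inr (Or.inr ⟨[], by simp [List.cons_prefix_iff],
            by simp [List.cons_prefix_iff]⟩))

/-- forward preservation suffices -/
lemma isDyadicSubtree_of_forward (d : List Bool → List Bool)
    (hS : ∀ t₀ t₁, StrictPrefix t₀ t₁ → StrictPrefix (d t₀) (d t₁))
    (hP : ∀ t₀ t₁, PrecRel t₀ t₁ → PrecRel (d t₀) (d t₁)) :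
    IsDyadicSubtree d := by
  have hne : ∀ t₀ t₁ : List Bool, t₀ ≠ t₁ → d t₀ ≠ d t₁ := by
    intro t₀ t₁ hne
    rcases tree_trichotomy t₀ t₁ with h | h | h | h
    · exact (hS _ _ ⟨h, hne⟩).2
    · exact fun he => (hS _ _ ⟨h, hne.symm⟩).2 he.symm
    · exact (hP _ _ h).ne
    · exact fun he => (hP _ _ h).ne he.symm
  refine ⟨fun t₀ t₁ h => by_contra fun hc => hne _ _ hc h, fun t₀ t₁ => ⟨hS t₀ t₁, ?_⟩,
    fun t₀ t₁ => ⟨hP t₀ t₁, ?_⟩⟩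
  · intro h
    rcases eq_or_ne t₀ t₁ with rfl | hne'
    · exact absurd rfl h.2
    rcases tree_trichotomy t₀ t₁ with h' | h' | h' | h'
    · exact ⟨h', hne'⟩
    · have h2 := (hS _ _ ⟨h', hne'.symm⟩).1
      exact absurd (h2.eq_of_length (le_antisymm h2.length_le h.1.length_le)) (hS _ _ ⟨h', hne'.symm⟩).2
    · exact absurd h.1 (hP _ _ h').not_prefix.1
    · exact absurd h.1 (hP _ _ h').not_prefix.2
  · intro h
    rcases eq_or_ne t₀ t₁ with rfl | hne'
    · exact absurd rfl h.ne
    rcases tree_trichotomy t₀ t₁ with h' | h' | h' | h'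
    · exact absurd (hS _ _ ⟨h', hne'⟩).1 h.not_prefix.1
    · exact absurd (hS _ _ ⟨h', hne'.symm⟩).1 h.not_prefix.2
    · exact h'
    · exact absurd h (hP _ _ h').asymm

section construction
variable (B : List Bool → Prop) (s₀ : List Bool)
  (H : ∀ t : List Bool, s₀ <+: t → ∃ t', t <+: t' ∧ B t')

open Classical in
/-- pick an extension in `B` -/
noncomputable def pickB (u : List Bool) : List Bool :=
  if h : s₀ <+: u then Classical.choose (H u h) else u

lemma pickB_spec {u : List Bool} (h : s₀ <+: u) :
    u <+: pickB B s₀ H u ∧ B (pickB B s₀ H u) := by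
  rw [pickB, dif_pos h]
  exact Classical.choose_spec (H u h)

/-- the subtree function, on reversed indices -/
noncomputable def DD : List Bool → List Bool
  | [] => pickB B s₀ H s₀
  | (b :: r) => pickB B s₀ H (DD r ++ [b])

lemma DD_inv : ∀ r : List Bool, s₀ <+: DD B s₀ H r ∧ B (DD B s₀ H r) := by
  intro r
  induction r with
  | nil => exact pickB_spec B s₀ H (List.prefix_refl s₀)
  | cons b r ih =>
    have h1 : s₀ <+: DD B s₀ H r ++ [b] := ih.1.trans (List.prefix_append _ _)
    have h2 := pickB_spec B s₀ H h1
    exact ⟨h1.trans h2.1, h2.2⟩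

lemma DD_ext (b : Bool) (r : List Bool) :
    DD B s₀ H r ++ [b] <+: DD B s₀ H (b :: r) :=
  (pickB_spec B s₀ H ((DD_inv B s₀ H r).1.trans (List.prefix_append _ _))).1

lemma DD_step (b : Bool) (r : List Bool) :
    DD B s₀ H r <+: DD B s₀ H (b :: r) ∧
      (DD B s₀ H r).length < (DD B s₀ H (b :: r)).length := by
  have h := DD_ext B s₀ H b r
  exact ⟨(List.prefix_append _ _).trans h, by
    have := h.length_le; simp at this; omega⟩

lemma DD_mono : ∀ (m r : List Bool), DD B s₀ H r <+: DD B s₀ H (m ++ r) ∧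
    (m ≠ [] → (DD B s₀ H r).length < (DD B s₀ H (m ++ r)).length) := by
  intro m
  induction m with
  | nil => exact fun r => ⟨List.prefix_refl _, by simp⟩
  | cons b m ih =>
    intro r
    have h1 := ih r
    have h2 := DD_step B s₀ H b (m ++ r)
    exact ⟨h1.1.trans h2.1, fun _ => lt_of_le_of_lt h1.1.length_le h2.2⟩

noncomputable def dB (t : List Bool) : List Bool := DD B s₀ H t.reverse

lemma dB_subtree : IsDyadicSubtree (dB B s₀ H) := by
  apply isDyadicSubtree_of_forward
  · rintro t₀ t₁ ⟨⟨l, rfl⟩, hne⟩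
    have hl : l ≠ [] := by rintro rfl; simp at hne
    have hkey := DD_mono B s₀ H l.reverse t₀.reverse
    have e : (t₀ ++ l).reverse = l.reverse ++ t₀.reverse := by simp
    have hlt := hkey.2 (by simpa using hl)
    constructor
    · show DD B s₀ H t₀.reverse <+: DD B s₀ H (t₀ ++ l).reverse
      rw [e]; exact hkey.1
    · show DD B s₀ H t₀.reverse ≠ DD B s₀ H (t₀ ++ l).reverse
      rw [e]; intro he; rw [he] at hlt; omega
  · rintro t₀ t₁ ⟨w, ⟨l₀, rfl⟩, ⟨l₁, rfl⟩⟩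
    refine ⟨dB B s₀ H w, ?_, ?_⟩
    · have h1 : DD B s₀ H w.reverse ++ [false] <+: DD B s₀ H (false :: w.reverse) :=
        DD_ext B s₀ H false w.reverse
      have h2 := (DD_mono B s₀ H l₀.reverse (false :: w.reverse)).1
      show DD B s₀ H w.reverse ++ [false] <+: DD B s₀ H (w ++ [false] ++ l₀).reverse
      rw [show (w ++ [false] ++ l₀).reverse = l₀.reverse ++ (false :: w.reverse) by simp]
      exact h1.trans h2
    · have h1 : DD B s₀ H w.reverse ++ [true] <+: DD B s₀ H (true :: w.reverse) :=
        DD_ext B s₀ H true w.reverse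
      have h2 := (DD_mono B s₀ H l₁.reverse (true :: w.reverse)).1
      show DD B s₀ H w.reverse ++ [true] <+: DD B s₀ H (w ++ [true] ++ l₁).reverse
      rw [show (w ++ [true] ++ l₁).reverse = l₁.reverse ++ (true :: w.reverse) by simp]
      exact h1.trans h2

lemma dB_mem (t : List Bool) : B (dB B s₀ H t) := (DD_inv B s₀ H t.reverse).2

end construction

section analytic
variable {X : Type*} [NormedAddCommGroup X] [NormedSpace ℝ X]
  {E : Type*} [NormedAddCommGroup E] [NormedSpace ℝ E]
  (x : ℕ → X) (hx1 : ∀ n, ‖x n‖ = 1)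
  (ι : (ℕ →₀ ℝ) →ₗ[ℝ] E)
  (hnorm : ∀ z : ℕ →₀ ℝ,
      ‖ι z‖ = ⨆ m : ℕ, ‖∑ n ∈ Finset.range (m + 1), z n • x n‖)
  (Q : E →L[ℝ] X) (hQ : ∀ n, Q (ι (Finsupp.single n 1)) = x n)

include hx1 in
lemma partial_bound (z : ℕ →₀ ℝ) (m : ℕ) :
    ‖∑ n ∈ Finset.range (m + 1), z n • x n‖ ≤ ∑ n ∈ z.support, |z n| := by
  calc ‖∑ n ∈ Finset.range (m + 1), z n • x n‖
      ≤ ∑ n ∈ Finset.range (m + 1), ‖z n • x n‖ := norm_sum_le _ _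
    _ = ∑ n ∈ Finset.range (m + 1), |z n| := by
        simp [norm_smul, hx1, Real.norm_eq_abs]
    _ = ∑ n ∈ (Finset.range (m + 1)) ∩ z.support, |z n| := by
        refine (Finset.sum_subset Finset.inter_subset_left ?_).symm
        intro i _ hni
        by_cases hi : i ∈ z.support
        · simp_all
        · simpa using Finsupp.notMem_support_iff.mp hi
    _ ≤ ∑ n ∈ z.support, |z n| :=
        Finset.sum_le_sum_of_subset_of_nonneg Finset.inter_subset_right
          (fun _ _ _ => abs_nonneg _)

include hx1 hnorm in
lemma norm_partial_le (z : ℕ →₀ ℝ) (m : ℕ) :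
    ‖∑ n ∈ Finset.range (m + 1), z n • x n‖ ≤ ‖ι z‖ := by
  rw [hnorm z]
  exact le_ciSup ⟨∑ n ∈ z.support, |z n|,
    by rintro _ ⟨m, rfl⟩; exact partial_bound x hx1 z m⟩ m

include hnorm in
lemma norm_le_of_partials (z : ℕ →₀ ℝ) (b : ℝ)
    (h : ∀ m, ‖∑ n ∈ Finset.range (m + 1), z n • x n‖ ≤ b) : ‖ι z‖ ≤ b := by
  rw [hnorm z]; exact ciSup_le h

include hQ in
lemma Q_apply (z : ℕ →₀ ℝ) : Q (ι z) = ∑ n ∈ z.support, z n • x n := by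
  have h1 : z = ∑ n ∈ z.support, Finsupp.single n (z n) := by
    rw [← Finsupp.sum]; exact (Finsupp.sum_single z).symm
  conv_lhs => rw [h1]
  rw [map_sum, map_sum]
  refine Finset.sum_congr rfl fun n _ => ?_
  have h2 : Finsupp.single n (z n) = z n • Finsupp.single n (1 : ℝ) := by
    rw [Finsupp.smul_single', mul_one]
  rw [h2, map_smul, map_smul, hQ n]

include hQ in
lemma Q_apply_eq_partial (z : ℕ →₀ ℝ) (m : ℕ) (h : z.support ⊆ Finset.range (m + 1)) :
    ∑ n ∈ Finset.range (m + 1), z n • x n = Q (ι z) := by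
  rw [Q_apply x ι Q hQ z]
  refine (Finset.sum_subset h ?_).symm
  intro i _ hi
  rw [Finsupp.notMem_support_iff.mp hi, zero_smul]

end analytic

theorem stmt_15 {X : Type*} [NormedAddCommGroup X] [NormedSpace ℝ X] [CompleteSpace X]
    (x : ℕ → X) (hx1 : ∀ n, ‖x n‖ = 1)
    (hxd : ∀ y : X, ‖y‖ = 1 → ∀ ε : ℝ, 0 < ε → ∃ n, ‖y - x n‖ < ε)
    {E : Type*} [NormedAddCommGroup E] [NormedSpace ℝ E] [CompleteSpace E]
    (ι : (ℕ →₀ ℝ) →ₗ[ℝ] E) (hιd : DenseRange ι)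
    (hnorm : ∀ z : ℕ →₀ ℝ,
      ‖ι z‖ = ⨆ m : ℕ, ‖∑ n ∈ Finset.range (m + 1), z n • x n‖)
    (Q : E →L[ℝ] X) (hQ : ∀ n, Q (ι (Finsupp.single n 1)) = x n)
    (v : List Bool → (ℕ →₀ ℝ))
    -- `(v t)` is topologically equivalent to the basis of James tree
    (hJT : TopEquivJamesTree (fun t => ι (v t)))
    -- `(v t)` is a tree-block
    (hblock : ∀ σ : ℕ → Bool,
      (∀ n : ℕ, v (List.ofFn fun i : Fin n => σ i) ≠ 0) ∧
      (∀ n : ℕ, ∀ i ∈ (v (List.ofFn fun i : Fin n => σ i)).support,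
        ∀ j ∈ (v (List.ofFn fun i : Fin (n + 1) => σ i)).support, i < j)) :
    ∃ d : List Bool → List Bool, IsDyadicSubtree d ∧
      ∃ Θ : ℝ, 1 ≤ Θ ∧ ∀ t : List Bool,
        Θ⁻¹ ≤ ‖Q (ι (v (d t)))‖ ∧ ‖Q (ι (v (d t)))‖ ≤ Θ := by
  obtain ⟨⟨c, C, hc, hcC, hb⟩, _, ⟨L, hLconv, hLnotX, _⟩⟩ := hJT
  have hC : (0:ℝ) < C := lt_of_lt_of_le hc hcC
  by_cases hA : ∃ δ : ℝ, 0 < δ ∧ ∃ s₀ : List Bool,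
      ∀ t, s₀ <+: t → ∃ t', t <+: t' ∧ δ ≤ ‖Q (ι (v t'))‖
  · -- positive case: build the subtree inside `B`
    obtain ⟨δ, hδ, s₀, H⟩ := hA
    set B : List Bool → Prop := fun u => δ ≤ ‖Q (ι (v u))‖ with hB
    refine ⟨dB B s₀ H, dB_subtree B s₀ H, max δ⁻¹ (max 1 (‖Q‖ * C)), ?_, ?_⟩
    · exact le_max_of_le_right (le_max_left _ _)
    · intro t
      have hmem : δ ≤ ‖Q (ι (v (dB B s₀ H t)))‖ := dB_mem B s₀ H t
      have hΘpos : (0:ℝ) < max δ⁻¹ (max 1 (‖Q‖ * C)) :=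
        lt_of_lt_of_le one_pos (le_max_of_le_right (le_max_left _ _))
      constructor
      · refine le_trans ?_ hmem
        exact (inv_le_comm₀ hΘpos hδ).mpr (le_max_left _ _)
      · refine le_trans ?_ (le_max_of_le_right (le_max_right _ _))
        calc ‖Q (ι (v (dB B s₀ H t)))‖ ≤ ‖Q‖ * ‖ι (v (dB B s₀ H t))‖ := Q.le_opNorm _
          _ ≤ ‖Q‖ * C := mul_le_mul_of_nonneg_left (hb (dB B s₀ H t)).2 (norm_nonneg Q)
  · -- negative case: derive a contradiction
    exfalso
    push_neg at hA
    have h2 : ∀ (s : List Bool) (k : ℕ), ∃ t, s ++ [false] <+: t ∧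
        ∀ t', t <+: t' → ‖Q (ι (v t'))‖ < (1/2:ℝ)^(k+1) := by
      intro s k
      obtain ⟨t, ht1, ht2⟩ := hA ((1/2:ℝ)^(k+1)) (by positivity) (s ++ [false])
      exact ⟨t, ht1, ht2⟩
    -- the chain
    obtain ⟨T, hT⟩ : ∃ T : ℕ → List Bool, ∀ k : ℕ, (T k ++ [false]) <+: T (k+1) ∧
        ∀ t', T (k+1) <+: t' → ‖Q (ι (v t'))‖ < (1/2:ℝ)^(k+1) :=
      ⟨fun k => Nat.rec [] (fun k s => Classical.choose (h2 s k)) k,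
        fun k => Classical.choose_spec (h2 _ k)⟩
    have hTstep : ∀ k, T k <+: T (k+1) ∧ (T k).length < (T (k+1)).length := by
      intro k
      have h := (hT k).1
      refine ⟨(List.prefix_append _ _).trans h, ?_⟩
      have := h.length_le
      simp at this
      omega
    have hchain : ∀ k j, j ≤ k → T j <+: T k := by
      intro k
      induction k with
      | zero =>
        intro j hj
        have : j = 0 := by omega
        subst this
        exact List.prefix_refl _
      | succ k ih =>
        intro j hj
        rcases Nat.lt_or_ge j (k+1) with h | h
        · exact (ih j (by omega)).trans (hTstep k).1
        · have : j = k + 1 := by omega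
          subst this
          exact List.prefix_refl _
    have hlenmono : StrictMono (fun k => (T k).length) :=
      strictMono_nat_of_lt_succ fun k => (hTstep k).2
    have hlenk : ∀ k, k ≤ (T k).length := by
      intro k
      induction k with
      | zero => omega
      | succ k ih => have := (hTstep k).2; omega
    -- the branch
    set σ : ℕ → Bool := fun n => (T (n+1)).getD n false with hσ
    have hof : ∀ k, (List.ofFn fun i : Fin (T k).length => σ i) = T k := by
      intro k
      apply List.ext_getElem (by simp)
      intro i h1 h2
      have hi1 : i < (T (i+1)).length := lt_of_lt_of_le (by omega) (hlenk (i+1))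
      have h2' : i < (T k).length := by simpa using h1
      simp only [List.getElem_ofFn, hσ]
      rw [List.getD_eq_getElem _ _ hi1]
      rcases le_total (i+1) k with h | h
      · exact (hchain k (i+1) h).getElem hi1
      · exact ((hchain (i+1) k h).getElem h2').symm
    -- block structure along the branch
    have hbσ := hblock σ
    have hsupp_lt : ∀ n m : ℕ, n < m →
        ∀ i ∈ (v (List.ofFn fun i : Fin n => σ i)).support,
        ∀ j ∈ (v (List.ofFn fun i : Fin m => σ i)).support, i < j := by
      intro n m
      induction m with
      | zero => omega
      | succ m ih =>
        intro hnm
        rcases Nat.lt_or_ge n m with h | h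
        · intro i hi j hj
          obtain ⟨p, hp⟩ := Finsupp.support_nonempty_iff.mpr (hbσ.1 m)
          exact lt_trans (ih h i hi p hp) (hbσ.2 m p hp j hj)
        · have : n = m := by omega
          subst this
          exact hbσ.2 n
    -- the block sequence
    set u : ℕ → (ℕ →₀ ℝ) := fun k => v (T (k+1)) with hu
    have huF : ∀ k, u k = v (List.ofFn fun i : Fin (T (k+1)).length => σ i) := by
      intro k
      rw [hof (k+1)]
    have hu_norm : ∀ k, ‖Q (ι (u k))‖ ≤ (1/2:ℝ)^(k+1) :=
      fun k => le_of_lt ((hT k).2 (T (k+1)) (List.prefix_refl _))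
    have hu_C : ∀ k, ‖ι (u k)‖ ≤ C := fun k => (hb (T (k+1))).2
    have hu_supp : ∀ k k', k < k' → ∀ i ∈ (u k).support, ∀ j ∈ (u k').support, i < j := by
      intro k k' hkk'
      rw [huF k, huF k']
      exact hsupp_lt _ _ (hlenmono (by omega : k + 1 < k' + 1))
    -- partial sums of sums of blocks are bounded
    set S : ℕ → (ℕ →₀ ℝ) := fun N => ∑ k ∈ Finset.range N, u k with hS
    have hgeom : ∀ N : ℕ, ∑ k ∈ Finset.range N, (1/2:ℝ)^(k+1) ≤ 1 := by
      intro N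
      have h1 : ∑ k ∈ Finset.range N, (1/2:ℝ)^(k+1)
          = (∑ k ∈ Finset.range N, (1/2:ℝ)^k) * (1/2) := by
        rw [Finset.sum_mul]
        exact Finset.sum_congr rfl fun k _ => (pow_succ _ _)
      rw [h1]
      have := sum_geometric_two_le N
      linarith
    have hS_norm : ∀ N, ‖ι (S N)‖ ≤ 1 + C := by
      intro N
      apply norm_le_of_partials x ι hnorm
      intro m
      have hcoe : ∀ n, (S N) n = ∑ k ∈ Finset.range N, u k n := by
        intro n
        rw [hS]
        simp [Finsupp.finset_sum_apply]
      have hsplit : ∑ n ∈ Finset.range (m+1), (S N) n • x n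
          = ∑ k ∈ Finset.range N, ∑ n ∈ Finset.range (m+1), u k n • x n := by
        rw [Finset.sum_comm]
        refine Finset.sum_congr rfl fun n _ => ?_
        rw [hcoe n, Finset.sum_smul]
      rw [hsplit]
      set P : ℕ → X := fun k => ∑ n ∈ Finset.range (m+1), u k n • x n with hP
      set K : Finset ℕ := (Finset.range N).filter (fun k => ∃ i ∈ (u k).support, i ≤ m)
        with hK
      have hPzero : ∀ k ∈ Finset.range N, k ∉ K → P k = 0 := by
        intro k hk hkK
        rw [hK] at hkK
        simp only [Finset.mem_filter, hk, true_and, not_exists, not_and, not_le] at hkK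
        apply Finset.sum_eq_zero
        intro n hn
        have hnm : n ≤ m := by simp at hn; omega
        have : u k n = 0 := by
          by_contra hne
          exact absurd hnm (not_le.mpr (hkK n (Finsupp.mem_support_iff.mpr hne)))
        rw [this, zero_smul]
      have hsum2 : ∑ k ∈ Finset.range N, P k = ∑ k ∈ K, P k :=
        (Finset.sum_subset (Finset.filter_subset _ _) hPzero).symm
      rw [hsum2]
      rcases Finset.eq_empty_or_nonempty K with hKe | hKne
      · rw [hKe]
        simp
        linarith
      · set p := K.max' hKne with hp
        have hpK : p ∈ K := K.max'_mem hKne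
        have hfull : ∀ k ∈ K.erase p, (u k).support ⊆ Finset.range (m+1) := by
          intro k hk
          have hkK : k ∈ K := Finset.mem_of_mem_erase hk
          have hkp : k < p :=
            lt_of_le_of_ne (K.le_max' k hkK) (Finset.ne_of_mem_erase hk)
          intro j hj
          rw [hK] at hpK
          simp only [Finset.mem_filter] at hpK
          obtain ⟨i, hi, him⟩ := hpK.2
          have := hu_supp k p hkp j hj i hi
          simp
          omega
        have hPfull : ∀ k ∈ K.erase p, P k = Q (ι (u k)) := by
          intro k hk
          exact Q_apply_eq_partial x ι Q hQ (u k) m (hfull k hk)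
        have hsum3 : ∑ k ∈ K, P k = (∑ k ∈ K.erase p, P k) + P p :=
          (Finset.sum_erase_add K P hpK).symm
        rw [hsum3]
        calc ‖(∑ k ∈ K.erase p, P k) + P p‖
            ≤ ‖∑ k ∈ K.erase p, P k‖ + ‖P p‖ := norm_add_le _ _
          _ ≤ (∑ k ∈ K.erase p, ‖P k‖) + ‖P p‖ := by
              have := norm_sum_le (K.erase p) P
              linarith
          _ ≤ (∑ k ∈ K.erase p, (1/2:ℝ)^(k+1)) + ‖P p‖ := by
              have : ∑ k ∈ K.erase p, ‖P k‖ ≤ ∑ k ∈ K.erase p, (1/2:ℝ)^(k+1) := by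
                refine Finset.sum_le_sum fun k hk => ?_
                rw [hPfull k hk]
                exact hu_norm k
              linarith
          _ ≤ (∑ k ∈ Finset.range N, (1/2:ℝ)^(k+1)) + ‖P p‖ := by
              have : ∑ k ∈ K.erase p, (1/2:ℝ)^(k+1)
                  ≤ ∑ k ∈ Finset.range N, (1/2:ℝ)^(k+1) := by
                refine Finset.sum_le_sum_of_subset_of_nonneg ?_ (fun _ _ _ => by positivity)
                exact (Finset.erase_subset _ _).trans (Finset.filter_subset _ _)
              linarith
          _ ≤ 1 + C := by
              have h1 := hgeom N
              have h2 : ‖P p‖ ≤ C :=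
                le_trans (norm_partial_le x hx1 ι hnorm (u p) m) (hu_C p)
              linarith
    -- conclude : L σ = 0, contradiction
    have hLzero : ∀ f : StrongDual ℝ E, L σ f = 0 := by
      intro f
      have hfs : ∀ N, ‖∑ k ∈ Finset.range N, f (ι (u k))‖ ≤ ‖f‖ * (1 + C) := by
        intro N
        have h1 : ∑ k ∈ Finset.range N, f (ι (u k)) = f (ι (S N)) := by
          rw [hS, map_sum, map_sum]
        rw [h1]
        calc ‖f (ι (S N))‖ ≤ ‖f‖ * ‖ι (S N)‖ := f.le_opNorm _
          _ ≤ ‖f‖ * (1 + C) := mul_le_mul_of_nonneg_left (hS_norm N) (norm_nonneg f)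
      have hconv : Tendsto (fun k => f (ι (u k))) atTop (nhds (L σ f)) := by
        have h1 := hLconv σ f
        have h3 := h1.comp ((hlenmono.comp (fun a b hab => by show a+1 < b+1; omega : StrictMono
          (fun k : ℕ => k + 1))).tendsto_atTop)
        refine h3.congr fun k => ?_
        show f (ι (v (List.ofFn fun i : Fin (T (k+1)).length => σ i))) = f (ι (u k))
        rw [hof (k+1)]
      have hces := hconv.cesaro
      have hzero : Tendsto (fun n : ℕ => (n:ℝ)⁻¹ * ∑ i ∈ Finset.range n, f (ι (u i)))
          atTop (nhds 0) := by
        apply squeeze_zero_norm (a := fun n : ℕ => (n:ℝ)⁻¹ * (‖f‖ * (1 + C)))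
        · intro n
          calc ‖(n:ℝ)⁻¹ * ∑ i ∈ Finset.range n, f (ι (u i))‖
              = (n:ℝ)⁻¹ * ‖∑ i ∈ Finset.range n, f (ι (u i))‖ := by
                rw [norm_mul, Real.norm_eq_abs ((n:ℝ)⁻¹), abs_of_nonneg (by positivity)]
            _ ≤ (n:ℝ)⁻¹ * (‖f‖ * (1 + C)) :=
                mul_le_mul_of_nonneg_left (hfs n) (by positivity)
        · simpa using tendsto_inv_atTop_nhds_zero_nat.mul_const (‖f‖ * (1 + C))
      exact tendsto_nhds_unique hces hzero
    have hL0 : L σ = 0 := ContinuousLinearMap.ext fun f => hLzero f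
    exact hLnotX σ ⟨0, by rw [map_zero, hL0]⟩
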